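/- Let R̂ = ℝ[[x,y,z,w]]/(x² + y² − (w+1)z²), let α ∈ R̂ be a unit with α² = w + 1, let Q = (x, y − αz)R̂, and P R̂ = (x,y,z)R̂. Then the sequence 0 → R̂/Q → R̂/Q → R̂/PR̂ → 0, where the first map is multiplication by y + αz and the second is the natural surjection, is a short exact sequence of R̂-modules. In particular, multiplication by y + αz is injective on R̂/Q with cokernel R̂/PR̂. -/

import Mathlib

/-!
Statement 9: in `R̂ = ℝ[[x,y,z,w]]/(x² + y² − (w+1)z²)`, with a unit `α` satisfying
`α² = w + 1`, `Q = (x, y − αz)` and `P R̂ = (x,y,z)`, the sequence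
`0 → R̂/Q → R̂/Q → R̂/PR̂ → 0`, with first map multiplication by `y + αz` and second map the
natural surjection, is a short exact sequence of `R̂`-modules.
-/
noncomputable section

open MvPowerSeries

/-- The power series `x² + y² − (w+1)z² ∈ ℝ[[x,y,z,w]]`
(with `x = X 0`, `y = X 1`, `z = X 2`, `w = X 3`). -/
def quadSeries : MvPowerSeries (Fin 4) ℝ :=
  X 0 ^ 2 + X 1 ^ 2 - (X 3 + 1) * X 2 ^ 2

/-- The complete local ring `R̂ = ℝ[[x,y,z,w]]/(x² + y² − (w+1)z²)`. -/
def Rhat : Type := MvPowerSeries (Fin 4) ℝ ⧸ Ideal.span {quadSeries}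

instance : CommRing Rhat := by unfold Rhat; infer_instance

/-- The images `x`, `y`, `z`, `w` of the four variables in `R̂`. -/
def xh : Rhat := Ideal.Quotient.mk _ (X 0)
def yh : Rhat := Ideal.Quotient.mk _ (X 1)
def zh : Rhat := Ideal.Quotient.mk _ (X 2)
def wh : Rhat := Ideal.Quotient.mk _ (X 3)

/-- The ideal `P R̂ = (x, y, z)` of `R̂`. -/
def Phat : Ideal Rhat := Ideal.span {xh, yh, zh}



section Aux
open Finset

abbrev S4 : Type := MvPowerSeries (Fin 4) ℝ

/-- Coefficients of the power series √(1+t). -/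
noncomputable def sqc : ℕ → ℝ
  | 0 => 1
  | n+1 => ((if n = 0 then (1:ℝ) else 0) -
      ∑ i ∈ (Finset.range n).attach, sqc (i+1) * sqc (n - i)) / 2
  termination_by n => n
  decreasing_by
  all_goals (have h := i.2; simp only [Finset.mem_range] at h; omega)

lemma sq_conv (n : ℕ) :
    ∑ k ∈ Finset.range (n+1), sqc k * sqc (n - k) =
      if n = 0 then 1 else if n = 1 then 1 else 0 := by
  cases n with
  | zero => simp [sqc]
  | succ m =>
    rw [Finset.sum_range_succ', Finset.sum_range_succ]
    have hmid : ∑ i ∈ Finset.range m, sqc (i+1) * sqc (m+1-(i+1)) =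
        ∑ i ∈ (Finset.range m).attach, sqc (i+1) * sqc (m - i) := by
      rw [← Finset.sum_attach (Finset.range m) (fun i => sqc (i+1) * sqc (m+1-(i+1)))]
      exact Finset.sum_congr rfl (fun i _ => by rw [Nat.succ_sub_succ])
    have hdef : sqc (m+1) = ((if m = 0 then (1:ℝ) else 0) -
        ∑ i ∈ (Finset.range m).attach, sqc (i+1) * sqc (m - i)) / 2 := by
      conv_lhs => rw [sqc]
    rw [hmid]
    have h0 : sqc 0 = 1 := by rw [sqc]
    simp only [Nat.sub_zero, Nat.sub_self, h0, mul_one, one_mul]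
    rw [hdef]
    by_cases hm : m = 0 <;> simp [hm] <;> ring


/-- `u` is supported on monomials in the last variable only. -/
def Supp3 (u : S4) : Prop := ∀ d : Fin 4 →₀ ℕ, d ≠ Finsupp.single 3 (d 3) → coeff d u = 0

lemma coeff_mul_X' (φ : S4) (i : Fin 4) (m : Fin 4 →₀ ℕ) :
    coeff m (φ * X i) =
      if m i = 0 then 0 else coeff (m - Finsupp.single i 1) φ := by
  rw [X_def, coeff_mul_monomial]
  by_cases h : m i = 0
  · rw [if_neg, if_pos h]
    rw [Finsupp.single_le_iff, h]
    omega
  · rw [if_pos, if_neg h, mul_one]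
    rw [Finsupp.single_le_iff]
    omega

lemma coeff_mul_diag (u φ : S4) (hu : Supp3 u) (m : Fin 4 →₀ ℕ) :
    coeff m (φ * u) =
      ∑ k ∈ Finset.range (m 3 + 1),
        coeff (m - Finsupp.single 3 k) φ * coeff (Finsupp.single 3 k) u := by
  classical
  rw [coeff_mul]
  apply Finset.sum_bij_ne_zero (i := fun p _ _ => p.2 3)
  · rintro ⟨p1, p2⟩ h1 h2
    rw [Finset.HasAntidiagonal.mem_antidiagonal] at h1
    simp only [Finset.mem_range]
    have : m 3 = p1 3 + p2 3 := by rw [← h1]; simp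
    omega
  · rintro ⟨p1, p2⟩ h11 h12 ⟨q1, q2⟩ h21 h22 heq
    rw [Finset.HasAntidiagonal.mem_antidiagonal] at h11 h21
    have hp2 : p2 = Finsupp.single 3 (p2 3) := by
      by_contra hc
      exact h12 (by rw [hu p2 hc, mul_zero])
    have hq2 : q2 = Finsupp.single 3 (q2 3) := by
      by_contra hc
      exact h22 (by rw [hu q2 hc, mul_zero])
    simp only at heq
    have h2 : p2 = q2 := by rw [hp2, hq2, heq]
    have h1 : p1 = q1 := by
      have := h11.trans h21.symm
      rw [h2] at this
      exact add_right_cancel this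
    simp [h1, h2]
  · intro k hk hgk
    rw [Finset.mem_range] at hk
    have hle : Finsupp.single (3 : Fin 4) k ≤ m := by
      rw [Finsupp.single_le_iff]; omega
    refine ⟨(m - Finsupp.single 3 k, Finsupp.single 3 k), ?_, ?_, ?_⟩
    · rw [Finset.HasAntidiagonal.mem_antidiagonal]
      exact tsub_add_cancel_of_le hle
    · exact hgk
    · simp
  · rintro ⟨p1, p2⟩ h1 h2
    rw [Finset.HasAntidiagonal.mem_antidiagonal] at h1
    have hp2 : p2 = Finsupp.single 3 (p2 3) := by
      by_contra hc
      exact h2 (by rw [hu p2 hc, mul_zero])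
    have hp1 : p1 = m - p2 := eq_tsub_of_add_eq h1
    simp only
    rw [hp1]
    congr 2
    · rw [← hp2]
    · rw [← hp2]

/-- The square root of `1 + w` in `ℝ[[x,y,z,w]]`. -/
def usq : S4 := fun d => if d = Finsupp.single 3 (d 3) then sqc (d 3) else 0

lemma coeff_usq (d : Fin 4 →₀ ℕ) :
    coeff d usq = if d = Finsupp.single 3 (d 3) then sqc (d 3) else 0 := rfl

lemma supp3_usq : Supp3 usq := fun d hd => by rw [coeff_usq, if_neg hd]

lemma coeff_usq_single (k : ℕ) : coeff (Finsupp.single 3 k) usq = sqc k := by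
  rw [coeff_usq, if_pos] <;> rw [Finsupp.single_eq_same]

lemma constantCoeff_usq : constantCoeff usq = 1 := by
  have h0 : (0 : Fin 4 →₀ ℕ) = Finsupp.single 3 0 := by simp
  have : coeff (0 : Fin 4 →₀ ℕ) usq = sqc 0 := by
    rw [h0, coeff_usq_single]
  rw [← coeff_zero_eq_constantCoeff, this, sqc]

lemma usq_mul_usq : usq * usq = X 3 + 1 := by
  ext d
  classical
  rw [coeff_mul, map_add]
  by_cases hd : d = Finsupp.single 3 (d 3)
  · set n := d 3 with hn
    rw [hd, Finsupp.antidiagonal_single, Finset.sum_map]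
    have hsum : ∀ p : ℕ × ℕ, p ∈ Finset.HasAntidiagonal.antidiagonal n →
        (coeff (Finsupp.single 3 p.1) usq) * (coeff (Finsupp.single 3 p.2) usq)
          = sqc p.1 * sqc p.2 := by
      intro p _
      rw [coeff_usq_single, coeff_usq_single]
    rw [Finset.sum_congr rfl (fun p hp => by
      simpa using hsum p hp)]
    rw [Finset.Nat.sum_antidiagonal_eq_sum_range_succ_mk]
    rw [sq_conv]
    rw [coeff_X, coeff_one]
    have h1 : (Finsupp.single (3:Fin 4) n = Finsupp.single 3 1) ↔ n = 1 := by
      constructor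
      · intro h; exact (Finsupp.single_injective 3).eq_iff.mp h ▸ rfl
      · intro h; rw [h]
    have h2 : (Finsupp.single (3:Fin 4) n = 0) ↔ n = 0 := Finsupp.single_eq_zero
    by_cases hn0 : n = 0
    · simp only [hn0]
      rw [if_pos trivial, if_neg, if_pos (Finsupp.single_zero 3)]
      · norm_num
      · intro h
        have := (Finsupp.single_injective (3:Fin 4)).eq_iff.mp h
        omega
    · by_cases hn1 : n = 1
      · simp [hn1]
      · rw [if_neg hn0, if_neg hn1, if_neg (by rw [h1]; exact hn1), if_neg (by rw [h2]; exact hn0)]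
        norm_num
  · have hz : ∀ p : (Fin 4 →₀ ℕ) × (Fin 4 →₀ ℕ), p ∈ Finset.HasAntidiagonal.antidiagonal d →
        (coeff p.1 usq) * (coeff p.2 usq) = 0 := by
      rintro ⟨p1, p2⟩ hp
      rw [Finset.HasAntidiagonal.mem_antidiagonal] at hp
      by_cases h1 : p1 = Finsupp.single 3 (p1 3)
      · by_cases h2 : p2 = Finsupp.single 3 (p2 3)
        · exfalso
          apply hd
          rw [← hp, h1, h2, ← Finsupp.single_add]
          rw [Finsupp.single_eq_same]
        · rw [supp3_usq p2 h2, mul_zero]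
      · rw [supp3_usq p1 h1, zero_mul]
    rw [Finset.sum_congr rfl hz, Finset.sum_const_zero]
    rw [coeff_X, coeff_one]
    rw [if_neg, if_neg, add_zero]
    · intro h; apply hd; rw [h]; simp
    · intro h; apply hd; rw [h]
      have : Finsupp.single (3:Fin 4) 1 3 = 1 := Finsupp.single_eq_same
      rw [this]

lemma sub_add_single (d : Fin 4 →₀ ℕ) (i : Fin 4) (h : d i ≠ 0) :
    d - Finsupp.single i 1 + Finsupp.single i 1 = d := by
  ext j
  by_cases hj : j = i
  · subst hj
    simp only [Finsupp.add_apply, Finsupp.tsub_apply, Finsupp.single_eq_same]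
    omega
  · simp [Finsupp.single_eq_of_ne' (Ne.symm hj)]

/-- `G = y - u z`. -/
def Gser (u : S4) : S4 := X 1 - u * X 2

lemma coeff_mul_G (u : S4) (hu : Supp3 u) (B : S4) (m : Fin 4 →₀ ℕ) :
    coeff m (B * Gser u) =
      (if m 1 = 0 then 0 else coeff (m - Finsupp.single 1 1) B) -
      (if m 2 = 0 then 0 else
        ∑ k ∈ Finset.range (m 3 + 1),
          coeff (m - Finsupp.single 2 1 - Finsupp.single 3 k) B *
            coeff (Finsupp.single 3 k) u) := by
  have hG : B * Gser u = B * X 1 - (B * u) * X 2 := by unfold Gser; ring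
  rw [hG, map_sub, coeff_mul_X', coeff_mul_X']
  congr 1
  by_cases h : m 2 = 0
  · rw [if_pos h, if_pos h]
  · rw [if_neg h, if_neg h, coeff_mul_diag u B hu]
    have h3 : (m - Finsupp.single 2 1 : Fin 4 →₀ ℕ) 3 = m 3 := by
      simp [Finsupp.tsub_apply, Finsupp.single_apply]
    rw [h3]

/-- The quotient-by-`G` coefficient function, defined by recursion on the `z`-degree. -/
noncomputable def bfun (u q : S4) : (Fin 4 →₀ ℕ) → ℝ := fun m =>
  if m 2 = 0 then coeff (m + Finsupp.single 1 1) q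
  else coeff (m + Finsupp.single 1 1) q +
    ∑ k ∈ Finset.range (m 3 + 1),
      coeff (Finsupp.single 3 k) u *
        bfun u q (m + Finsupp.single 1 1 - Finsupp.single 2 1 - Finsupp.single 3 k)
  termination_by m => m 2
  decreasing_by
    simp only [Finsupp.tsub_apply, Finsupp.add_apply, Finsupp.single_apply]
    simp
    omega

lemma bfun_eq (u q : S4) (m : Fin 4 →₀ ℕ) : bfun u q m =
    if m 2 = 0 then coeff (m + Finsupp.single 1 1) q
    else coeff (m + Finsupp.single 1 1) q +
      ∑ k ∈ Finset.range (m 3 + 1),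
        coeff (Finsupp.single 3 k) u *
          bfun u q (m + Finsupp.single 1 1 - Finsupp.single 2 1 - Finsupp.single 3 k) := by
  rw [bfun]

def bofq (u q : S4) : S4 := fun m => if m 0 = 0 then bfun u q m else 0

lemma coeff_bofq (u q : S4) (m : Fin 4 →₀ ℕ) :
    coeff m (bofq u q) = if m 0 = 0 then bfun u q m else 0 := rfl

lemma exists_decomp (u : S4) (hu : Supp3 u) (p : S4) :
    ∃ a b c : S4, p = a * X 0 + b * Gser u + c ∧
      ∀ d : Fin 4 →₀ ℕ, d 0 ≠ 0 ∨ d 1 ≠ 0 → coeff d c = 0 := by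
  classical
  set a : S4 := (fun m => coeff (m + Finsupp.single 0 1) p) with ha
  have ha' : ∀ m, coeff m a = coeff (m + Finsupp.single 0 1) p := fun _ => rfl
  set q : S4 := p - a * X 0 with hqdef
  set b : S4 := bofq u q with hb
  refine ⟨a, b, p - a * X 0 - b * Gser u, by ring, ?_⟩
  have hq : ∀ d : Fin 4 →₀ ℕ, d 0 ≠ 0 → coeff d q = 0 := by
    intro d hd
    rw [hqdef, map_sub, coeff_mul_X', if_neg hd, ha', sub_add_single d 0 hd, sub_self]
  have hcq : ∀ d : Fin 4 →₀ ℕ, coeff d (p - a * X 0 - b * Gser u)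
      = coeff d q - coeff d (b * Gser u) := by
    intro d; rw [hqdef]; simp [map_sub]
  intro d hd
  rw [hcq]
  by_cases h0 : d 0 = 0
  · -- then d 1 ≠ 0
    have h1 : d 1 ≠ 0 := hd.resolve_left (by simpa using h0)
    rw [coeff_mul_G u hu, if_neg h1]
    have hm0 : (d - Finsupp.single 1 1 : Fin 4 →₀ ℕ) 0 = 0 := by
      simp [Finsupp.tsub_apply, Finsupp.single_apply, h0]
    rw [coeff_bofq, if_pos hm0, bfun_eq]
    have hme : d - Finsupp.single 1 1 + Finsupp.single 1 1 = d := sub_add_single d 1 h1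
    have hm2 : (d - Finsupp.single 1 1 : Fin 4 →₀ ℕ) 2 = d 2 := by
      simp [Finsupp.tsub_apply, Finsupp.single_apply]
    have hm3 : (d - Finsupp.single 1 1 : Fin 4 →₀ ℕ) 3 = d 3 := by
      simp [Finsupp.tsub_apply, Finsupp.single_apply]
    rw [hme, hm2, hm3]
    by_cases h2 : d 2 = 0
    · rw [if_pos h2, if_pos h2]
      ring
    · rw [if_neg h2, if_neg h2]
      have hsum : ∀ k ∈ Finset.range (d 3 + 1),
          coeff (d - Finsupp.single 2 1 - Finsupp.single 3 k) b *
            coeff (Finsupp.single 3 k) u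
          = coeff (Finsupp.single 3 k) u *
              bfun u q (d - Finsupp.single 2 1 - Finsupp.single 3 k) := by
        intro k _
        have : (d - Finsupp.single 2 1 - Finsupp.single 3 k : Fin 4 →₀ ℕ) 0 = 0 := by
          simp [Finsupp.tsub_apply, Finsupp.single_apply, h0]
        rw [coeff_bofq, if_pos this, mul_comm]
      rw [Finset.sum_congr rfl hsum]
      ring
  · -- d 0 ≠ 0 : everything vanishes
    rw [hq d h0, coeff_mul_G u hu]
    have hz1 : (if d 1 = 0 then (0:ℝ) else coeff (d - Finsupp.single 1 1) b) = 0 := by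
      split_ifs with h1
      · rfl
      · rw [coeff_bofq, if_neg]
        simp [Finsupp.tsub_apply, Finsupp.single_apply, h0]
    have hz2 : (if d 2 = 0 then (0:ℝ) else
        ∑ k ∈ Finset.range (d 3 + 1),
          coeff (d - Finsupp.single 2 1 - Finsupp.single 3 k) b *
            coeff (Finsupp.single 3 k) u) = 0 := by
      split_ifs with h2
      · rfl
      · apply Finset.sum_eq_zero
        intro k _
        rw [coeff_bofq, if_neg, zero_mul]
        simp [Finsupp.tsub_apply, Finsupp.single_apply, h0]
    rw [hz1, hz2]
    ring

lemma vanish (u : S4) (hu : Supp3 u) (c A B : S4)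
    (hc : ∀ d : Fin 4 →₀ ℕ, d 0 ≠ 0 ∨ d 1 ≠ 0 → coeff d c = 0)
    (heq : c * X 2 = A * X 0 + B * Gser u) : c = 0 := by
  classical
  have step : ∀ d : Fin 4 →₀ ℕ, d 0 = 0 → coeff d B =
      (if d 2 = 0 then 0 else
        ∑ k ∈ Finset.range (d 3 + 1),
          coeff (d + Finsupp.single 1 1 - Finsupp.single 2 1 - Finsupp.single 3 k) B *
            coeff (Finsupp.single 3 k) u) := by
    intro d h0
    set d' : Fin 4 →₀ ℕ := d + Finsupp.single 1 1 with hd'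
    have hd'0 : d' 0 = 0 := by simp [hd', Finsupp.add_apply, Finsupp.single_apply, h0]
    have hd'1 : d' 1 ≠ 0 := by simp [hd', Finsupp.add_apply, Finsupp.single_apply]
    have hd'2 : d' 2 = d 2 := by simp [hd', Finsupp.add_apply, Finsupp.single_apply]
    have hd'3 : d' 3 = d 3 := by simp [hd', Finsupp.add_apply, Finsupp.single_apply]
    have hd'e : d' - Finsupp.single 1 1 = d := by rw [hd']; exact add_tsub_cancel_right _ _
    have hL : coeff d' (c * X 2) = 0 := by
      rw [coeff_mul_X']
      split_ifs with h2
      · rfl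
      · apply hc
        right
        simp [Finsupp.tsub_apply, Finsupp.single_apply, hd'1]
    have hA : coeff d' (A * X 0) = 0 := by
      rw [coeff_mul_X', if_pos hd'0]
    have hBG : coeff d' (B * Gser u) = 0 := by
      have h' := congrArg (coeff d') heq
      rw [map_add, hA, hL, zero_add] at h'
      exact h'.symm
    rw [coeff_mul_G u hu, if_neg hd'1, hd'e, hd'2, hd'3, sub_eq_zero] at hBG
    exact hBG
  have key : ∀ n : ℕ, ∀ d : Fin 4 →₀ ℕ, d 0 = 0 → d 2 ≤ n → coeff d B = 0 := by
    intro n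
    induction n with
    | zero =>
      intro d h0 h2
      rw [step d h0, if_pos (by omega)]
    | succ n ih =>
      intro d h0 h2
      rw [step d h0]
      split_ifs with h2z
      · rfl
      · apply Finset.sum_eq_zero
        intro k _
        rw [ih _ ?_ ?_, zero_mul]
        · simp [Finsupp.tsub_apply, Finsupp.add_apply, Finsupp.single_apply, h0]
        · simp only [Finsupp.tsub_apply, Finsupp.add_apply, Finsupp.single_apply]
          simp
          omega
  have hB : ∀ d : Fin 4 →₀ ℕ, d 0 = 0 → coeff d B = 0 := fun d h0 => key (d 2) d h0 le_rfl
  ext d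
  rw [map_zero]
  by_cases hd : d 0 ≠ 0 ∨ d 1 ≠ 0
  · exact hc d hd
  · push_neg at hd
    obtain ⟨h0, h1⟩ := hd
    set d'' : Fin 4 →₀ ℕ := d + Finsupp.single 2 1 with hd''
    have hc2 : coeff d'' (c * X 2) = coeff d c := by
      rw [coeff_mul_X', if_neg, add_tsub_cancel_right]
      simp [hd'', Finsupp.add_apply, Finsupp.single_apply]
    have hA : coeff d'' (A * X 0) = 0 := by
      rw [coeff_mul_X', if_pos]
      simp [hd'', Finsupp.add_apply, Finsupp.single_apply, h0]
    have hBG : coeff d'' (B * Gser u) = 0 := by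
      rw [coeff_mul_G u hu, if_pos, if_neg]
      · rw [zero_sub, neg_eq_zero]
        apply Finset.sum_eq_zero
        intro k _
        rw [hB, zero_mul]
        simp [hd'', Finsupp.tsub_apply, Finsupp.add_apply, Finsupp.single_apply, h0]
      · simp [hd'', Finsupp.add_apply, Finsupp.single_apply]
      · simp [hd'', Finsupp.add_apply, Finsupp.single_apply, h1]
    have h' := congrArg (coeff d'') heq
    rw [map_add, hA, hBG, hc2] at h'
    simpa using h'

lemma mul_u_zero (u c : S4) (hu : Supp3 u) (hu0 : coeff 0 u ≠ 0) (h : c * u = 0) : c = 0 := by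
  have key : ∀ n : ℕ, ∀ d : Fin 4 →₀ ℕ, d 3 ≤ n → coeff d c = 0 := by
    intro n
    induction n with
    | zero =>
      intro d h3
      have heval := congrArg (coeff d) h
      rw [coeff_mul_diag u c hu, map_zero, Finset.sum_range_succ'] at heval
      have h3' : d 3 = 0 := Nat.le_zero.mp h3
      rw [h3'] at heval
      simp only [Finset.range_zero, Finset.sum_empty, zero_add, Finsupp.single_zero,
        tsub_zero] at heval
      rcases mul_eq_zero.mp heval with h' | h'
      · exact h'
      · exact absurd h' hu0
    | succ n ih =>
      intro d h3
      have heval := congrArg (coeff d) h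
      rw [coeff_mul_diag u c hu, map_zero, Finset.sum_range_succ'] at heval
      have hrest : ∀ k ∈ Finset.range (d 3),
          coeff (d - Finsupp.single 3 (k+1)) c * coeff (Finsupp.single 3 (k+1)) u = 0 := by
        intro k _
        rw [ih _ ?_, zero_mul]
        simp only [Finsupp.tsub_apply, Finsupp.single_eq_same]
        omega
      rw [Finset.sum_congr rfl hrest, Finset.sum_const_zero, zero_add] at heval
      simp only [Finsupp.single_zero, tsub_zero] at heval
      rcases mul_eq_zero.mp heval with h' | h'
      · exact h'
      · exact absurd h' hu0
  ext d
  rw [map_zero]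
  exact key (d 3) d le_rfl

lemma core_reg (u : S4) (hu : Supp3 u) (hu0 : coeff 0 u ≠ 0) (r : S4)
    (h : r * (X 1 + u * X 2) ∈ Ideal.span {X 0, Gser u}) :
    r ∈ Ideal.span {X 0, Gser u} := by
  obtain ⟨a, b, c, hp, hc⟩ := exists_decomp u hu r
  set u' : S4 := u + u with hu'def
  have hu' : Supp3 u' := fun d hd => by rw [hu'def, map_add, hu d hd, add_zero]
  have hu'0 : coeff 0 u' ≠ 0 := by
    rw [hu'def, map_add]
    intro h'
    apply hu0
    linarith
  have h1 : (a * X 0 + b * Gser u) * (X 1 + u * X 2) ∈ Ideal.span {X 0, Gser u} :=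
    Ideal.mem_span_pair.mpr ⟨a * (X 1 + u * X 2), b * (X 1 + u * X 2), by ring⟩
  have h2 : c * (X 1 + u * X 2) ∈ Ideal.span {X 0, Gser u} := by
    have hcc : c * (X 1 + u * X 2)
        = r * (X 1 + u * X 2) - (a * X 0 + b * Gser u) * (X 1 + u * X 2) := by
      rw [hp]; ring
    rw [hcc]
    exact sub_mem h h1
  have hmem : (c * u') * X 2 ∈ Ideal.span {X 0, Gser u} := by
    have h3 : (c * u') * X 2 = c * (X 1 + u * X 2) - c * Gser u := by
      rw [hu'def]; unfold Gser; ring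
    rw [h3]
    exact sub_mem h2 (Ideal.mem_span_pair.mpr ⟨0, c, by ring⟩)
  obtain ⟨A, B, hAB⟩ := Ideal.mem_span_pair.mp hmem
  have hcu' : ∀ d : Fin 4 →₀ ℕ, d 0 ≠ 0 ∨ d 1 ≠ 0 → coeff d (c * u') = 0 := by
    intro d hd
    rw [coeff_mul_diag u' c hu']
    apply Finset.sum_eq_zero
    intro k _
    rw [hc, zero_mul]
    rcases hd with hd | hd
    · left
      simp only [Finsupp.tsub_apply, Finsupp.single_apply]
      simp
      omega
    · right
      simp only [Finsupp.tsub_apply, Finsupp.single_apply]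
      simp
      omega
  have hzero : c * u' = 0 := vanish u hu (c * u') A B hcu' hAB.symm
  have hc0 : c = 0 := mul_u_zero u' c hu' hu'0 hzero
  rw [hp, hc0, add_zero]
  exact Ideal.mem_span_pair.mpr ⟨a, b, rfl⟩

/-! ### Ring-level assembly -/

abbrev mkh : S4 →+* Rhat := Ideal.Quotient.mk (Ideal.span {quadSeries})

lemma mkh_surj : Function.Surjective mkh := Ideal.Quotient.mk_surjective

lemma constantCoeff_quad : constantCoeff quadSeries = 0 := by
  simp [quadSeries]

lemma span_quad_ne_top : Ideal.span {quadSeries} ≠ ⊤ := by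
  intro h
  have h1 : (1 : S4) ∈ Ideal.span {quadSeries} := h ▸ Submodule.mem_top
  obtain ⟨t, ht⟩ := Ideal.mem_span_singleton'.mp h1
  have h2 := congrArg (constantCoeff) ht
  rw [map_mul, map_one, constantCoeff_quad, mul_zero] at h2
  exact zero_ne_one h2

instance : Nontrivial Rhat := Ideal.Quotient.nontrivial_iff.mpr span_quad_ne_top

instance : IsLocalRing Rhat := IsLocalRing.of_surjective' mkh mkh_surj

lemma isUnit_two_Rhat : IsUnit (2 : Rhat) := by
  have h2 : IsUnit (2 : S4) := by
    rw [MvPowerSeries.isUnit_iff_constantCoeff]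
    rw [map_ofNat]
    exact isUnit_iff_ne_zero.mpr (by norm_num)
  have := h2.map mkh
  rwa [map_ofNat] at this

lemma wh_eq : wh = mkh (X 3) := rfl

lemma uh_sq : (mkh usq) ^ 2 = wh + 1 := by
  rw [pow_two, ← map_mul, usq_mul_usq, map_add, map_one, wh_eq]

lemma alpha_cases (α : Rhat) (hα : IsUnit α) (hsq : α ^ 2 = wh + 1) :
    α = mkh usq ∨ α = - mkh usq := by
  have hprod : (α - mkh usq) * (α + mkh usq) = 0 := by
    have h : (α - mkh usq) * (α + mkh usq) = α ^ 2 - (mkh usq) ^ 2 := by ring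
    rw [h, hsq, uh_sq, sub_self]
  have hsum : IsUnit ((α - mkh usq) + (α + mkh usq)) := by
    have h : (α - mkh usq) + (α + mkh usq) = 2 * α := by ring
    rw [h]
    exact isUnit_two_Rhat.mul hα
  rcases IsLocalRing.isUnit_or_isUnit_of_isUnit_add hsum with h | h
  · right
    have := (IsUnit.mul_right_eq_zero h).mp hprod
    exact eq_neg_of_add_eq_zero_left this
  · left
    rw [mul_comm] at hprod
    have := (IsUnit.mul_right_eq_zero h).mp hprod
    exact sub_eq_zero.mp this

theorem main_with (α : Rhat) (hα : IsUnit α) (v : S4) (hv3 : Supp3 v)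
    (hv0 : coeff 0 v ≠ 0) (hvsq : v * v = X 3 + 1) (hva : mkh v = α) :
    Function.Injective
        (LinearMap.lsmul Rhat (Rhat ⧸ (Ideal.span {xh, yh - α * zh} : Ideal Rhat))
          (yh + α * zh)) ∧
      ∃ g : (Rhat ⧸ (Ideal.span {xh, yh - α * zh} : Ideal Rhat)) →ₗ[Rhat] Rhat ⧸ Phat,
        (∀ r : Rhat, g (Ideal.Quotient.mk _ r) = Ideal.Quotient.mk _ r) ∧
          Function.Surjective g ∧
          LinearMap.range
              (LinearMap.lsmul Rhat (Rhat ⧸ (Ideal.span {xh, yh - α * zh} : Ideal Rhat))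
                (yh + α * zh)) =
            LinearMap.ker g := by
  set Iv : Ideal S4 := Ideal.span {X 0, Gser v} with hIv
  set Q : Ideal Rhat := Ideal.span {xh, yh - α * zh} with hQ
  have quad_mem : quadSeries ∈ Iv := by
    apply Ideal.mem_span_pair.mpr
    refine ⟨X 0, X 1 + v * X 2, ?_⟩
    unfold quadSeries Gser
    linear_combination (- (X 2 : S4) ^ 2) * hvsq
  have hmkG : mkh (Gser v) = yh - α * zh := by
    unfold Gser
    rw [map_sub, map_mul, hva]
    rfl
  have hmkH : mkh (X 1 + v * X 2) = yh + α * zh := by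
    rw [map_add, map_mul, hva]
    rfl
  have hQmap : Q = Ideal.map mkh Iv := by
    rw [hQ, hIv, Ideal.map_span, Set.image_insert_eq, Set.image_singleton, hmkG]
    rfl
  have mem_Q_iff : ∀ r : S4, mkh r ∈ Q ↔ r ∈ Iv := by
    intro r
    constructor
    · intro hr
      rw [hQmap] at hr
      obtain ⟨s, hs, hsr⟩ := (Ideal.mem_map_iff_of_surjective mkh mkh_surj).mp hr
      have hdiff : s - r ∈ Ideal.span {quadSeries} := Ideal.Quotient.eq.mp hsr
      have hdiff' : s - r ∈ Iv := Ideal.span_le.mpr (by simpa using quad_mem) hdiff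
      have : r = s - (s - r) := by ring
      rw [this]
      exact sub_mem hs hdiff'
    · intro hr
      rw [hQmap]
      exact Ideal.mem_map_of_mem mkh hr
  -- membership transfer for the multiplication map
  have hmulQ : ∀ x : Rhat, (yh + α * zh) * x ∈ Q → x ∈ Q := by
    intro x hx
    obtain ⟨x', rfl⟩ := mkh_surj x
    rw [← hmkH, ← map_mul] at hx
    have hx' : (X 1 + v * X 2) * x' ∈ Iv := (mem_Q_iff _).mp hx
    rw [mul_comm] at hx'
    have := core_reg v hv3 hv0 x' hx'
    exact (mem_Q_iff _).mpr this
  constructor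
  · -- injectivity
    intro m1 m2 h12
    have key : ∀ m : Rhat ⧸ Q, (yh + α * zh) • m = 0 → m = 0 := by
      intro m hm
      obtain ⟨x, rfl⟩ := Ideal.Quotient.mk_surjective m
      have hx : (yh + α * zh) * x ∈ Q := by
        rw [← Ideal.Quotient.eq_zero_iff_mem, map_mul]; exact hm
      exact Ideal.Quotient.eq_zero_iff_mem.mpr (hmulQ x hx)
    have : (yh + α * zh) • (m1 - m2) = 0 := by
      rw [smul_sub]
      rw [LinearMap.lsmul_apply, LinearMap.lsmul_apply] at h12
      rw [h12, sub_self]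
    have := key _ this
    exact sub_eq_zero.mp this
  · -- the quotient map
    have hQle : Q ≤ Phat := by
      rw [hQ]
      apply Ideal.span_le.mpr
      intro t ht
      rcases Set.mem_insert_iff.mp ht with h | h
      · rw [h]
        exact Ideal.subset_span (by simp)
      · rw [Set.mem_singleton_iff.mp h]
        apply sub_mem
        · exact Ideal.subset_span (by simp)
        · exact Ideal.mul_mem_left _ α (Ideal.subset_span (by simp))
    have hle' : Q ≤ Submodule.comap (LinearMap.id : Rhat →ₗ[Rhat] Rhat) Phat := by
      rw [Submodule.comap_id]
      exact hQle
    set g : (Rhat ⧸ Q) →ₗ[Rhat] Rhat ⧸ Phat :=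
      @Submodule.mapQ Rhat Rhat _ _ Semiring.toModule Q Rhat Rhat _ _ Semiring.toModule (RingHom.id Rhat) Phat (@LinearMap.id Rhat Rhat _ _ Semiring.toModule) hle' with hg
    have hgmk : ∀ r : Rhat, g (Ideal.Quotient.mk Q r) = Ideal.Quotient.mk Phat r := by
      intro r
      rw [hg]
      rfl
    refine ⟨g, hgmk, ?_, ?_⟩
    · intro t
      obtain ⟨r, rfl⟩ := Ideal.Quotient.mk_surjective t
      exact ⟨Ideal.Quotient.mk Q r, hgmk r⟩
    · -- range = ker
      have hmemP : yh + α * zh ∈ Phat := by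
        apply add_mem
        · exact Ideal.subset_span (by simp)
        · exact Ideal.mul_mem_left _ α (Ideal.subset_span (by simp))
      -- P ≤ Q ⊔ (yh + α zh)
      have hPle : Phat ≤ Q ⊔ Ideal.span {yh + α * zh} := by
        set half : Rhat := mkh ((MvPowerSeries.C (σ := Fin 4) (R := ℝ)) (1/2)) with hhalf
        have h1 : 2 * half = 1 := by
          have hC : (2 : S4) * (MvPowerSeries.C (σ := Fin 4) (R := ℝ)) (1/2) = 1 := by
            have h2C : (2 : S4) = (MvPowerSeries.C (σ := Fin 4) (R := ℝ)) 2 := by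
              rw [map_ofNat]
            rw [h2C, ← map_mul]
            norm_num
          rw [hhalf]
          calc 2 * mkh ((MvPowerSeries.C (σ := Fin 4) (R := ℝ)) (1/2))
              = mkh ((2 : S4) * (MvPowerSeries.C (σ := Fin 4) (R := ℝ)) (1/2)) := by
                rw [map_mul, map_ofNat]
            _ = 1 := by rw [hC, map_one]
        have hg1 : yh - α * zh ∈ Q ⊔ Ideal.span {yh + α * zh} :=
          Submodule.mem_sup_left (Ideal.subset_span (by simp))
        have hx1 : xh ∈ Q ⊔ Ideal.span {yh + α * zh} :=
          Submodule.mem_sup_left (Ideal.subset_span (by simp))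
        have hh1 : yh + α * zh ∈ Q ⊔ Ideal.span {yh + α * zh} :=
          Submodule.mem_sup_right (Ideal.subset_span rfl)
        rw [Phat]
        apply Ideal.span_le.mpr
        intro t ht
        rcases Set.mem_insert_iff.mp ht with h | h
        · rw [h]; exact hx1
        rcases Set.mem_insert_iff.mp h with h' | h'
        · -- yh
          rw [h']
          have hy : yh = half * (yh - α * zh) + half * (yh + α * zh) := by
            linear_combination (-yh) * h1
          have hmem2 : half * (yh - α * zh) + half * (yh + α * zh)
              ∈ Q ⊔ Ideal.span {yh + α * zh} :=
            add_mem (Ideal.mul_mem_left _ half hg1) (Ideal.mul_mem_left _ half hh1)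
          rwa [← hy] at hmem2
        · -- zh
          rw [Set.mem_singleton_iff.mp h']
          obtain ⟨uw, huw⟩ := hα
          set β : Rhat := ((uw⁻¹ : Rhatˣ) : Rhat) with hβ
          have hαβ : α * β = 1 := by
            rw [hβ, ← huw]
            exact uw.mul_inv
          have hz : zh = (half * β) * ((yh + α * zh) - (yh - α * zh)) := by
            linear_combination (-zh) * h1 + (-(2 * half * zh)) * hαβ
          have hmem3 : (half * β) * ((yh + α * zh) - (yh - α * zh))
              ∈ Q ⊔ Ideal.span {yh + α * zh} :=
            Ideal.mul_mem_left _ _ (sub_mem hh1 hg1)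
          rwa [← hz] at hmem3
      ext m
      simp only [LinearMap.mem_range, LinearMap.mem_ker]
      constructor
      · rintro ⟨n, rfl⟩
        obtain ⟨x, rfl⟩ := Ideal.Quotient.mk_surjective n
        change g (Ideal.Quotient.mk Q (yh + α * zh) * Ideal.Quotient.mk Q x) = 0
        rw [← map_mul, hgmk]
        exact Ideal.Quotient.eq_zero_iff_mem.mpr (Ideal.mul_mem_right x _ hmemP)
      · intro hm
        obtain ⟨x, rfl⟩ := Ideal.Quotient.mk_surjective m
        rw [hgmk] at hm
        have hxP : x ∈ Phat := Ideal.Quotient.eq_zero_iff_mem.mp hm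
        obtain ⟨y, hy, z, hz, hyz⟩ := Submodule.mem_sup.mp (hPle hxP)
        obtain ⟨s, hs⟩ := Ideal.mem_span_singleton'.mp hz
        refine ⟨Ideal.Quotient.mk Q s, ?_⟩
        change Ideal.Quotient.mk Q (yh + α * zh) * Ideal.Quotient.mk Q s = _
        rw [← map_mul, ← hyz, ← hs]
        rw [map_add, Ideal.Quotient.eq_zero_iff_mem.mpr hy, zero_add, mul_comm]

end Aux

/-- The sequence `0 → R̂/Q --(y+αz)--> R̂/Q → R̂/PR̂ → 0` is a short exact sequence:
multiplication by `y + αz` on `R̂/Q` is injective, and the natural map `R̂/Q → R̂/PR̂` is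
surjective with kernel equal to the image of multiplication by `y + αz`. -/
theorem ses_mul_y_add_alpha_z (α : Rhat) (hα : IsUnit α) (hsq : α ^ 2 = wh + 1) :
    Function.Injective
        (LinearMap.lsmul Rhat (Rhat ⧸ (Ideal.span {xh, yh - α * zh} : Ideal Rhat))
          (yh + α * zh)) ∧
      ∃ g : (Rhat ⧸ (Ideal.span {xh, yh - α * zh} : Ideal Rhat)) →ₗ[Rhat] Rhat ⧸ Phat,
        (∀ r : Rhat, g (Ideal.Quotient.mk _ r) = Ideal.Quotient.mk _ r) ∧
          Function.Surjective g ∧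
          LinearMap.range
              (LinearMap.lsmul Rhat (Rhat ⧸ (Ideal.span {xh, yh - α * zh} : Ideal Rhat))
                (yh + α * zh)) =
            LinearMap.ker g := by
  rcases alpha_cases α hα hsq with hv | hv
  · exact main_with α hα usq supp3_usq
      (by rw [coeff_zero_eq_constantCoeff_apply, constantCoeff_usq]; norm_num)
      usq_mul_usq hv.symm
  · refine main_with α hα (-usq) (fun d hd => by rw [map_neg, supp3_usq d hd, neg_zero])
      (by rw [map_neg, coeff_zero_eq_constantCoeff_apply, constantCoeff_usq]; norm_num)
      (by rw [neg_mul_neg]; exact usq_mul_usq)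
      (by rw [map_neg, hv])
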